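/- Suppose F = {Y_α : α < θ} is a maximal μ-free family (μ regular). Then there exists a condition p* ∈ Add(μ,θ) such that the family {X_{p*} ∩ Y_α : α ∉ dom(p*)} is a densely maximal μ-free family of subsets of X_{p*}. -/

import Mathlib

open Cardinal Set

universe u

/-- A condition of the Cohen forcing `Add(μ, I)`: a pair of disjoint subsets of the
index set `I`, both of cardinality `< μ` (the positive and negative coordinates of a
partial function `I → 2` of size `< μ`). -/
structure AddCond (μ : Cardinal.{u}) (I : Type u) where
  pos : Set I
  neg : Set I
  disj : Disjoint pos neg
  posSmall : #pos < μ
  negSmall : #neg < μ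

/-- `q` extends (is stronger than) `p`. -/
def AddLe {μ : Cardinal.{u}} {I : Type u} (q p : AddCond μ I) : Prop :=
  p.pos ⊆ q.pos ∧ p.neg ⊆ q.neg

/-- The Boolean combination of the family `f` coded by the condition `p`:
`X_p = ⋂_{i ∈ pos} f i \ ⋃_{i ∈ neg} f i`. -/
def XInd {μ : Cardinal.{u}} {I : Type u} {S : Type u} (f : I → Set S)
    (p : AddCond μ I) : Set S :=
  (⋂ i ∈ p.pos, f i) \ ⋃ i ∈ p.neg, f i

/-- The density ideal of the family `f`: `Y` belongs to it iff the set of conditions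
`p` with `X_p ∩ Y = ∅` is dense in `Add(μ, I)`. -/
def densityIdeal {I : Type u} {S : Type u} (μ : Cardinal.{u}) (f : I → Set S) :
    Set (Set S) :=
  {Y | ∀ p : AddCond μ I, ∃ q : AddCond μ I, AddLe q p ∧ XInd f q ∩ Y = ∅}

/-- `μ`-freeness for set families: every Boolean combination of fewer than `μ`
members is nonempty. -/
def MuFree {S : Type u} (μ : Cardinal.{u}) (F : Set (Set S)) : Prop :=
  ∀ A B : Set (Set S), A ⊆ F → B ⊆ F → Disjoint A B → #A < μ → #B < μ →
    (⋂₀ A \ ⋃₀ B).Nonempty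

namespace Stmt7Aux

variable {μ : Cardinal.{u}} {I S : Type u}

lemma mem_XInd {f : I → Set S} {p : AddCond μ I} {x : S} :
    x ∈ XInd f p ↔ (∀ i ∈ p.pos, x ∈ f i) ∧ ∀ i ∈ p.neg, x ∉ f i := by
  simp [XInd, mem_diff]

lemma addLe_refl (p : AddCond μ I) : AddLe p p := ⟨subset_rfl, subset_rfl⟩

lemma addLe_trans {r q p : AddCond μ I} (h1 : AddLe r q) (h2 : AddLe q p) : AddLe r p :=
  ⟨h2.1.trans h1.1, h2.2.trans h1.2⟩

lemma XInd_anti (f : I → Set S) {q p : AddCond μ I} (h : AddLe q p) :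
    XInd f q ⊆ XInd f p := fun x hx => by
  rw [mem_XInd] at hx ⊢
  exact ⟨fun i hi => hx.1 i (h.1 hi), fun i hi => hx.2 i (h.2 hi)⟩

lemma smallUnion (hμ : μ.IsRegular) {s t : Set I} (hs : #s < μ) (ht : #t < μ) :
    #(↥(s ∪ t)) < μ :=
  (Cardinal.mk_union_le s t).trans_lt (Cardinal.add_lt_of_lt hμ.aleph0_le hs ht)

/-- Compatibility of conditions. -/
def Compat (p q : AddCond μ I) : Prop := ∃ r : AddCond μ I, AddLe r p ∧ AddLe r q

lemma compat_symm {p q : AddCond μ I} (h : Compat p q) : Compat q p :=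
  ⟨h.choose, h.choose_spec.2, h.choose_spec.1⟩

lemma compat_self (p : AddCond μ I) : Compat p p := ⟨p, addLe_refl p, addLe_refl p⟩

lemma compat_of_disj (hμ : μ.IsRegular) (p q : AddCond μ I)
    (h : Disjoint (p.pos ∪ q.pos) (p.neg ∪ q.neg)) : Compat p q :=
  ⟨⟨p.pos ∪ q.pos, p.neg ∪ q.neg, h,
      smallUnion hμ p.posSmall q.posSmall, smallUnion hμ p.negSmall q.negSmall⟩,
    ⟨subset_union_left, subset_union_left⟩, ⟨subset_union_right, subset_union_right⟩⟩

lemma incompat_disjoint (hμ : μ.IsRegular) (Y : I → Set S) {p q : AddCond μ I}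
    (h : ¬ Compat p q) {x : S} (hxp : x ∈ XInd Y p) (hxq : x ∈ XInd Y q) : False := by
  have hd : ¬ Disjoint (p.pos ∪ q.pos) (p.neg ∪ q.neg) := fun hd => h (compat_of_disj hμ p q hd)
  rw [Set.not_disjoint_iff] at hd
  obtain ⟨i, hi1, hi2⟩ := hd
  rw [mem_XInd] at hxp hxq
  rcases hi1 with hip | hiq
  · rcases hi2 with hin | hin
    · exact (Set.disjoint_left.mp p.disj hip) hin
    · exact hxq.2 i hin (hxp.1 i hip)
  · rcases hi2 with hin | hin
    · exact hxp.2 i hin (hxq.1 i hiq)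
    · exact (Set.disjoint_left.mp q.disj hiq) hin

lemma XInd_nonempty (hμ : μ.IsRegular) (Y : I → Set S) (hinj : Function.Injective Y)
    (hfree : MuFree μ (Set.range Y)) (q : AddCond μ I) : (XInd Y q).Nonempty := by
  have := hfree (Y '' q.pos) (Y '' q.neg) (image_subset_range _ _) (image_subset_range _ _)
    ((Set.disjoint_image_iff hinj).2 q.disj)
    (Cardinal.mk_image_le.trans_lt q.posSmall) (Cardinal.mk_image_le.trans_lt q.negSmall)
  rwa [sInter_image, sUnion_image] at this

end Stmt7Aux

open Stmt7Aux

/-- If `F = {Y_α : α < θ}` is a maximal `μ`-free family (`μ` regular),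
then there is a condition `p* ∈ Add(μ,θ)` below which the restricted family is a
densely maximal `μ`-free family of subsets of `X_{p*}`: every Boolean combination
below `p*` is nonempty, and for every `q ≤ p*` and every `A ⊆ X_q` there is `r ≤ q`
with `X_r ∩ A = ∅` or `X_r ⊆ A`. -/
theorem stmt_7 {I : Type u} {S : Type u} (μ : Cardinal.{u}) (hμ : μ.IsRegular)
    (Y : I → Set S) (hinj : Function.Injective Y)
    (hfree : MuFree μ (Set.range Y))
    (hmax : ∀ B : Set S, MuFree μ (insert B (Set.range Y)) → B ∈ Set.range Y) :
    ∃ pstar : AddCond μ I,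
      (∀ q : AddCond μ I, AddLe q pstar → (XInd Y q).Nonempty) ∧
      (∀ q : AddCond μ I, AddLe q pstar → ∀ A ⊆ XInd Y q,
        ∃ r : AddCond μ I, AddLe r q ∧ (XInd Y r ∩ A = ∅ ∨ XInd Y r ⊆ A)) := by
  by_contra h
  push_neg at h
  have hne : ∀ q : AddCond μ I, (XInd Y q).Nonempty := XInd_nonempty hμ Y hinj hfree
  -- the set of "bad" conditions
  set D : Set (AddCond μ I) :=
    {q | ∃ A, A ⊆ XInd Y q ∧ ∀ r, AddLe r q →
        (XInd Y r ∩ A).Nonempty ∧ ¬ XInd Y r ⊆ A} with hD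
  -- D is dense
  have hdense : ∀ p : AddCond μ I, ∃ q, AddLe q p ∧ q ∈ D := by
    intro p
    obtain ⟨q, hqp, A, hA, hr⟩ := h p (fun q _ => hne q)
    refine ⟨q, hqp, A, hA, fun r hrq => ?_⟩
    have := hr r hrq
    exact this
  -- choose witnesses
  have hWit : ∀ q : AddCond μ I, ∃ A, q ∈ D →
      A ⊆ XInd Y q ∧ ∀ r, AddLe r q → (XInd Y r ∩ A).Nonempty ∧ ¬ XInd Y r ⊆ A := by
    intro q
    by_cases hq : q ∈ D
    · exact ⟨hq.choose, fun _ => hq.choose_spec⟩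
    · exact ⟨∅, fun h' => absurd h' hq⟩
  choose W hW using hWit
  -- a maximal antichain inside D
  obtain ⟨Q, hQmax⟩ := zorn_subset
      {Q : Set (AddCond μ I) | Q ⊆ D ∧ Q.Pairwise fun a b => ¬ Compat a b} (by
    intro c hc hchain
    refine ⟨⋃₀ c, ⟨fun q hq => ?_, fun a ha b hb hab => ?_⟩, fun s hs => subset_sUnion_of_mem hs⟩
    · obtain ⟨s, hs, hqs⟩ := hq
      exact (hc hs).1 hqs
    · obtain ⟨s, hs, has⟩ := ha
      obtain ⟨t, ht, hbt⟩ := hb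
      rcases eq_or_ne s t with rfl | hst
      · exact (hc hs).2 has hbt hab
      · rcases hchain hs ht hst with hsub | hsub
        · exact (hc ht).2 (hsub has) hbt hab
        · exact (hc hs).2 has (hsub hbt) hab)
  obtain ⟨⟨hQD, hQanti⟩, hQmaxi⟩ := hQmax
  -- every condition is compatible with a member of Q
  have hQmeet : ∀ p : AddCond μ I, ∃ q ∈ Q, Compat p q := by
    intro p
    obtain ⟨q', hq'p, hq'D⟩ := hdense p
    by_cases hc : ∃ q ∈ Q, Compat q' q
    · obtain ⟨q, hqQ, r, hr1, hr2⟩ := hc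
      exact ⟨q, hqQ, r, addLe_trans hr1 hq'p, hr2⟩
    · exfalso
      push_neg at hc
      have hq'Q : q' ∉ Q := fun hq'Q => hc q' hq'Q (compat_self q')
      have : insert q' Q ⊆ Q := hQmaxi
        ⟨insert_subset hq'D hQD, by
          have hsymm : Symmetric fun a b : AddCond μ I => ¬ Compat a b :=
            fun a b hab h' => hab (compat_symm h')
          haveI : Std.Symm (fun a b : AddCond μ I => ¬ Compat a b) := ⟨fun a b h => hsymm h⟩
          exact (Set.pairwise_insert_of_symm (r := fun a b : AddCond μ I => ¬ Compat a b)).2 ⟨hQanti, fun b hb _ => hc b hb⟩⟩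
        (subset_insert _ _)
      exact hq'Q (this (mem_insert _ _))
  -- the union of the witnesses
  set B : Set S := ⋃ q ∈ Q, W q with hB
  have hWsubB : ∀ q ∈ Q, W q ⊆ B := fun q hq => subset_biUnion_of_mem hq
  -- the witnesses live below their conditions and off distinct antichain members
  have hBq : ∀ q ∈ Q, ∀ {x : S}, x ∈ XInd Y q → x ∈ B → x ∈ W q := by
    intro q hqQ x hxq hxB
    obtain ⟨q', hq'Q, hxq'⟩ := Set.mem_iUnion₂.1 hxB
    rcases eq_or_ne q' q with rfl | hne'
    · exact hxq'
    · exact absurd (incompat_disjoint hμ Y (hQanti hqQ hq'Q hne'.symm) hxq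
        ((hW q' (hQD hq'Q)).1 hxq')) not_false
  -- B together with the family is μ-free
  have hBfree : MuFree μ (insert B (Set.range Y)) := by
    by_cases hBr : B ∈ Set.range Y
    · rwa [insert_eq_self.2 hBr]
    intro A' B' hA' hB' hdisj hAs hBs
    -- index sets
    set P0 : Set I := {i | Y i ∈ A'} with hP0
    set N0 : Set I := {i | Y i ∈ B'} with hN0
    have hP0s : #P0 < μ := by
      refine lt_of_le_of_lt (Cardinal.mk_le_of_injective (f := fun i : P0 => (⟨Y i, i.2⟩ : A'))
        ?_) hAs
      intro a b hab
      exact Subtype.ext (hinj (congrArg Subtype.val hab))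
    have hN0s : #N0 < μ := by
      refine lt_of_le_of_lt (Cardinal.mk_le_of_injective (f := fun i : N0 => (⟨Y i, i.2⟩ : B'))
        ?_) hBs
      intro a b hab
      exact Subtype.ext (hinj (congrArg Subtype.val hab))
    have hP0N0 : Disjoint P0 N0 := by
      rw [Set.disjoint_left]
      intro i hiP hiN
      exact (Set.disjoint_left.mp hdisj hiP) hiN
    set p : AddCond μ I := ⟨P0, N0, hP0N0, hP0s, hN0s⟩ with hp
    obtain ⟨q, hqQ, r, hrp, hrq⟩ := hQmeet p
    obtain ⟨hWsub, hWbad⟩ := hW q (hQD hqQ)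
    by_cases hBA : B ∈ A'
    · -- B is a positive member: use that X_r meets W q ⊆ B
      have hBB : B ∉ B' := fun h' => Set.disjoint_left.mp hdisj hBA h'
      obtain ⟨x, hx1, hx2⟩ := (hWbad r hrq).1
      refine ⟨x, fun Z hZ => ?_, ?_⟩
      · rcases hA' hZ with rfl | hZr
        · exact hWsubB q hqQ hx2
        · obtain ⟨i, rfl⟩ := hZr
          exact (mem_XInd.1 hx1).1 i (hrp.1 hZ)
      · rintro ⟨Z, hZ, hxZ⟩
        rcases hB' hZ with rfl | hZr
        · exact hBB hZ
        · obtain ⟨i, rfl⟩ := hZr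
          exact (mem_XInd.1 hx1).2 i (hrp.2 hZ) hxZ
    · -- B is not positive: use a point of X_r outside W q (hence outside B)
      obtain ⟨x, hx1, hx2⟩ := Set.not_subset.1 (hWbad r hrq).2
      have hxB : x ∉ B := fun hxB =>
        hx2 (hBq q hqQ (XInd_anti Y hrq hx1) hxB)
      refine ⟨x, fun Z hZ => ?_, ?_⟩
      · rcases hA' hZ with rfl | hZr
        · exact absurd hZ hBA
        · obtain ⟨i, rfl⟩ := hZr
          exact (mem_XInd.1 hx1).1 i (hrp.1 hZ)
      · rintro ⟨Z, hZ, hxZ⟩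
        rcases hB' hZ with rfl | hZr
        · exact hxB hxZ
        · obtain ⟨i, rfl⟩ := hZr
          exact (mem_XInd.1 hx1).2 i (hrp.2 hZ) hxZ
  -- hence B is in the family
  obtain ⟨i₀, hi₀⟩ := hmax B hBfree
  -- pick any member of the antichain and derive a contradiction
  obtain ⟨q, hqQ, -⟩ := hQmeet ⟨∅, ∅, disjoint_empty _,
    (Cardinal.mk_emptyCollection I).trans_lt hμ.pos, (Cardinal.mk_emptyCollection I).trans_lt hμ.pos⟩
  obtain ⟨hWsub, hWbad⟩ := hW q (hQD hqQ)
  by_cases hi : i₀ ∈ q.pos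
  · -- then X_q ⊆ B, so X_q ⊆ W q, contradicting badness
    refine (hWbad q (addLe_refl q)).2 (fun x hx => ?_)
    have hxB : x ∈ B := hi₀ ▸ (mem_XInd.1 hx).1 i₀ hi
    exact hBq q hqQ hx hxB
  · -- add i₀ to the negative part
    set r : AddCond μ I := ⟨q.pos, insert i₀ q.neg,
      Set.disjoint_left.2 (fun {x} hx hxin => by
        rcases Set.mem_insert_iff.1 hxin with rfl | hxn
        · exact hi hx
        · exact Set.disjoint_left.mp q.disj hx hxn),
      q.posSmall,
      Cardinal.mk_insert_le.trans_lt (Cardinal.add_lt_of_lt hμ.aleph0_le q.negSmall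
        (one_lt_aleph0.trans_le hμ.aleph0_le))⟩ with hr
    obtain ⟨x, hx1, hx2⟩ := (hWbad r ⟨subset_rfl, subset_insert _ _⟩).1
    have hxB : x ∈ B := hWsubB q hqQ hx2
    exact (mem_XInd.1 hx1).2 i₀ (mem_insert _ _) (hi₀ ▸ hxB)
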